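/- Let m, dA, dB be positive integers, let u : Fin m → (Fin dA → ℂ) and w : Fin m → (Fin dB → ℂ) be orthonormal families (∑_x u_i(x) · conj(u_j(x)) = δ_{ij} and ∑_y w_i(y) · conj(w_j(y)) = δ_{ij}), and let λ : Fin m → ℝ be strictly positive, pairwise distinct, with ∑_i λ_i = 1. Define the bipartite pure state ψ : Fin dA × Fin dB → ℂ by ψ(x, y) = ∑_i √(λ_i) · u_i(x) · w_i(y). If a unit vector φ : Fin dA × Fin dB → ℂ satisfies ∑_y φ(x, y) · conj(φ(x', y)) = ∑_y ψ(x, y) · conj(ψ(x', y)) for all x, x' ∈ Fin dA, and ∑_x φ(x, y) · conj(φ(x, y')) = ∑_x ψ(x, y) · conj(ψ(x, y')) for all y, y' ∈ Fin dB, then there exist phases θ : Fin m → ℝ such that φ(x, y) = ∑_i exp(√(−1)·θ_i) · √(λ_i) · u_i(x) · w_i(y) for all x, y. -/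

import Mathlib

open Finset

lemma master {d n : ℕ} (v : Fin n → Fin d → ℂ)
    (hv : ∀ i j, ∑ x, v i x * (starRingEnd ℂ) (v j x) = if i = j then 1 else 0)
    (p q : Fin n → ℂ) :
    ∑ x, (∑ i, p i * v i x) * (starRingEnd ℂ) (∑ j, q j * v j x)
      = ∑ i, p i * (starRingEnd ℂ) (q i) := by
  have this1 : ∀ x, (∑ i, p i * v i x) * (starRingEnd ℂ) (∑ j, q j * v j x)
      = ∑ i, ∑ j, (p i * (starRingEnd ℂ) (q j)) * (v i x * (starRingEnd ℂ) (v j x)) := by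
    intro x
    rw [map_sum, Finset.sum_mul_sum]
    refine Finset.sum_congr rfl fun i _ => Finset.sum_congr rfl fun j _ => ?_
    simp [map_mul]; ring
  simp only [this1]
  rw [Finset.sum_comm]
  refine Finset.sum_congr rfl fun i _ => ?_
  rw [Finset.sum_comm]
  simp only [← Finset.mul_sum, hv]
  simp

lemma ortho_expand {n d e : ℕ} (v : Fin n → Fin d → ℂ)
    (hv : ∀ i j, ∑ x, v i x * (starRingEnd ℂ) (v j x) = if i = j then 1 else 0)
    (lam : Fin n → ℝ) (hsum : ∑ i, lam i = 1)
    (g : Fin d → Fin e → ℂ)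
    (hnorm : ∑ x, ∑ y, g x y * (starRingEnd ℂ) (g x y) = 1)
    (hmarg : ∀ x x', ∑ y, g x y * (starRingEnd ℂ) (g x' y)
        = ∑ k, (lam k : ℂ) * v k x * (starRingEnd ℂ) (v k x')) :
    (∀ i i', ∑ y, (∑ x, (starRingEnd ℂ) (v i x) * g x y) *
        (starRingEnd ℂ) (∑ x, (starRingEnd ℂ) (v i' x) * g x y)
        = if i = i' then (lam i : ℂ) else 0) ∧
    (∀ x y, g x y = ∑ i, v i x * ∑ x', (starRingEnd ℂ) (v i x') * g x' y) := by
  set C := starRingEnd ℂ with hC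
  set β : Fin n → Fin e → ℂ := fun i y => ∑ x, C (v i x) * g x y with hβ
  have hv' : ∀ i j, ∑ x, C (v i x) * v j x = if i = j then 1 else 0 := by
    intro i j
    have := congrArg C (hv i j)
    simpa [map_sum, map_mul, apply_ite] using this
  have h1 : ∀ i i', ∑ y, β i y * C (β i' y) = if i = i' then (lam i : ℂ) else 0 := by
    intro i i'
    have step1 : ∀ y, β i y * C (β i' y)
        = ∑ x, ∑ x', (C (v i x) * v i' x') * (g x y * C (g x' y)) := by
      intro y
      rw [hβ]
      simp only
      rw [map_sum, Finset.sum_mul_sum]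
      refine Finset.sum_congr rfl fun x _ => Finset.sum_congr rfl fun x' _ => ?_
      simp [map_mul]; ring
    calc ∑ y, β i y * C (β i' y)
        = ∑ x, ∑ x', (C (v i x) * v i' x') * ∑ y, g x y * C (g x' y) := by
          simp only [step1]
          rw [Finset.sum_comm]
          refine Finset.sum_congr rfl fun x _ => ?_
          rw [Finset.sum_comm]
          exact Finset.sum_congr rfl fun x' _ => (Finset.mul_sum _ _ _).symm
      _ = ∑ x, ∑ x', ∑ k, (lam k : ℂ) * ((C (v i x) * v k x) * (v i' x' * C (v k x'))) := by
          refine Finset.sum_congr rfl fun x _ => Finset.sum_congr rfl fun x' _ => ?_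
          rw [hmarg, Finset.mul_sum]
          exact Finset.sum_congr rfl fun k _ => by ring
      _ = ∑ k, ∑ x, ∑ x', (lam k : ℂ) * ((C (v i x) * v k x) * (v i' x' * C (v k x'))) := by
          have hswap : ∀ x : Fin d, ∑ x' : Fin d, ∑ k : Fin n,
              (lam k : ℂ) * ((C (v i x) * v k x) * (v i' x' * C (v k x')))
              = ∑ k : Fin n, ∑ x' : Fin d,
              (lam k : ℂ) * ((C (v i x) * v k x) * (v i' x' * C (v k x'))) := by
            intro x; rw [Finset.sum_comm]
          simp only [hswap]
          rw [Finset.sum_comm]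
      _ = ∑ k, (lam k : ℂ) * ((∑ x, C (v i x) * v k x) * (∑ x', v i' x' * C (v k x'))) := by
          refine Finset.sum_congr rfl fun k _ => ?_
          rw [Finset.sum_mul_sum, Finset.mul_sum]
          refine Finset.sum_congr rfl fun x _ => ?_
          rw [Finset.mul_sum]
      _ = if i = i' then (lam i : ℂ) else 0 := by
          simp only [hv', hv]
          by_cases h : i = i'
          · subst h; simp
          · rw [if_neg h]
            refine Finset.sum_eq_zero fun k _ => ?_
            by_cases hik : i = k <;> by_cases hik' : i' = k <;> simp_all
  have hβsum : ∑ i, ∑ y, β i y * C (β i y) = 1 := by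
    have hdiag : ∀ i, ∑ y, β i y * C (β i y) = ((lam i : ℝ) : ℂ) := by
      intro i; rw [h1 i i]; simp
    rw [Finset.sum_congr rfl fun i _ => hdiag i, ← Complex.ofReal_sum, hsum,
      Complex.ofReal_one]
  refine ⟨h1, ?_⟩
  set p : Fin d → Fin e → ℂ := fun x y => ∑ i, v i x * β i y with hp
  have hconjβ : ∀ i y, C (β i y) = ∑ x, v i x * C (g x y) := by
    intro i y; rw [hβ]; simp [map_sum, map_mul]
  have T3y : ∀ y, ∑ x, p x y * C (g x y) = ∑ i, β i y * C (β i y) := by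
    intro y
    calc ∑ x, p x y * C (g x y)
        = ∑ x, ∑ i, β i y * (v i x * C (g x y)) := by
          refine Finset.sum_congr rfl fun x _ => ?_
          rw [hp]
          simp only
          rw [Finset.sum_mul]
          exact Finset.sum_congr rfl fun i _ => by ring
      _ = ∑ i, β i y * ∑ x, v i x * C (g x y) := by
          rw [Finset.sum_comm]
          exact Finset.sum_congr rfl fun i _ => (Finset.mul_sum _ _ _).symm
      _ = ∑ i, β i y * C (β i y) := Finset.sum_congr rfl fun i _ => by rw [hconjβ]
  have T3 : ∑ x, ∑ y, p x y * C (g x y) = 1 := by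
    rw [Finset.sum_comm]
    calc ∑ y, ∑ x, p x y * C (g x y) = ∑ y, ∑ i, β i y * C (β i y) :=
          Finset.sum_congr rfl fun y _ => T3y y
      _ = 1 := by rw [Finset.sum_comm]; exact hβsum
  have T2 : ∑ x, ∑ y, g x y * C (p x y) = 1 := by
    have : ∑ x, ∑ y, g x y * C (p x y) = C (∑ x, ∑ y, p x y * C (g x y)) := by
      simp only [map_sum, map_mul, hC, Complex.conj_conj]
      exact Finset.sum_congr rfl fun x _ => Finset.sum_congr rfl fun y _ => by ring
    rw [this, T3, map_one]
  have T4 : ∑ x, ∑ y, p x y * C (p x y) = 1 := by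
    have hT4y : ∀ y, ∑ x, p x y * C (p x y) = ∑ i, β i y * C (β i y) := by
      intro y
      have hrw : ∀ x, p x y = ∑ i, β i y * v i x := fun x =>
        Finset.sum_congr rfl fun i _ => mul_comm _ _
      simp only [hrw]
      exact master v hv (fun i => β i y) (fun i => β i y)
    rw [Finset.sum_comm]
    calc ∑ y, ∑ x, p x y * C (p x y) = ∑ y, ∑ i, β i y * C (β i y) :=
          Finset.sum_congr rfl fun y _ => hT4y y
      _ = 1 := by rw [Finset.sum_comm]; exact hβsum
  have hzero : ∑ x, ∑ y, (g x y - p x y) * C (g x y - p x y) = 0 := by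
    have expand : ∀ x y, (g x y - p x y) * C (g x y - p x y)
        = g x y * C (g x y) - g x y * C (p x y) - p x y * C (g x y)
          + p x y * C (p x y) := by
      intro x y; rw [map_sub]; ring
    simp only [expand, Finset.sum_add_distrib, Finset.sum_sub_distrib]
    rw [hnorm, T2, T3, T4]; ring
  have hns : ∑ x, ∑ y, Complex.normSq (g x y - p x y) = 0 := by
    have : ∑ x, ∑ y, ((Complex.normSq (g x y - p x y) : ℝ) : ℂ) = 0 := by
      simp only [← Complex.mul_conj]; exact hzero
    exact_mod_cast this
  intro x y
  have h0 := (Finset.sum_eq_zero_iff_of_nonneg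
      (fun x _ => Finset.sum_nonneg fun y _ => Complex.normSq_nonneg _)).mp hns x
      (Finset.mem_univ x)
  have h0' := (Finset.sum_eq_zero_iff_of_nonneg
      (fun y _ => Complex.normSq_nonneg _)).mp h0 y (Finset.mem_univ y)
  exact sub_eq_zero.mp (Complex.normSq_eq_zero.mp h0')


open Finset

/-- Let `ψ` be a bipartite pure state with Schmidt decomposition
`ψ(x,y) = ∑ i, √(λ i) · u i x · w i y`, where `(u i)` and `(w i)` are orthonormal
families and the Schmidt spectrum `λ` is strictly positive, pairwise distinct, and
sums to 1. Then any unit vector `φ` sharing both one-sided marginals with `ψ`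
differs from `ψ` only by phases on the Schmidt terms. -/
theorem bipartite_same_marginals_implies_phases (m dA dB : ℕ)
    (hm : 0 < m) (hdA : 0 < dA) (hdB : 0 < dB)
    (u : Fin m → Fin dA → ℂ) (w : Fin m → Fin dB → ℂ)
    (hu : ∀ i j, ∑ x, u i x * (starRingEnd ℂ) (u j x) = if i = j then 1 else 0)
    (hw : ∀ i j, ∑ y, w i y * (starRingEnd ℂ) (w j y) = if i = j then 1 else 0)
    (lam : Fin m → ℝ) (hpos : ∀ i, 0 < lam i)
    (hdist : Function.Injective lam) (hsum : ∑ i, lam i = 1)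
    (ψ : Fin dA × Fin dB → ℂ)
    (hψ : ∀ x y, ψ (x, y) = ∑ i, (Real.sqrt (lam i) : ℂ) * u i x * w i y)
    (φ : Fin dA × Fin dB → ℂ)
    (hφunit : ∑ p, ‖φ p‖ ^ 2 = 1)
    (hA : ∀ x x' : Fin dA,
      ∑ y, φ (x, y) * (starRingEnd ℂ) (φ (x', y)) =
      ∑ y, ψ (x, y) * (starRingEnd ℂ) (ψ (x', y)))
    (hB : ∀ y y' : Fin dB,
      ∑ x, φ (x, y) * (starRingEnd ℂ) (φ (x, y')) =
      ∑ x, ψ (x, y) * (starRingEnd ℂ) (ψ (x, y'))) :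
    ∃ θ : Fin m → ℝ, ∀ x y,
      φ (x, y) = ∑ i, Complex.exp (Complex.I * (θ i : ℂ)) *
        (Real.sqrt (lam i) : ℂ) * u i x * w i y := by
  have hC : ∀ z : ℂ, (starRingEnd ℂ) z = (starRingEnd ℂ) z := fun _ => rfl
  set C := starRingEnd ℂ with hCdef
  -- norm one, as a double sum
  have hnorm : ∑ x, ∑ y, φ (x, y) * C (φ (x, y)) = 1 := by
    have h2 : ∑ x, ∑ y, Complex.normSq (φ (x, y)) = 1 := by
      simpa [Fintype.sum_prod_type, Complex.sq_norm] using hφunit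
    simp only [hCdef, Complex.mul_conj]
    exact_mod_cast h2
  -- square root squared
  have hsq : ∀ k, (Real.sqrt (lam k) : ℂ) * (Real.sqrt (lam k) : ℂ) = (lam k : ℂ) := by
    intro k
    rw [← Complex.ofReal_mul, Real.mul_self_sqrt (hpos k).le]
  -- reduced matrices of ψ
  have hψA : ∀ x x', ∑ y, ψ (x, y) * C (ψ (x', y))
      = ∑ k, (lam k : ℂ) * u k x * C (u k x') := by
    intro x x'
    have hform : ∀ x y, ψ (x, y) = ∑ i, ((Real.sqrt (lam i) : ℂ) * u i x) * w i y := by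
      intro x y; rw [hψ]
    calc ∑ y, ψ (x, y) * C (ψ (x', y))
        = ∑ i, ((Real.sqrt (lam i) : ℂ) * u i x) * C ((Real.sqrt (lam i) : ℂ) * u i x') := by
          simp only [hform]; exact master w hw _ _
      _ = ∑ k, (lam k : ℂ) * u k x * C (u k x') := by
          refine Finset.sum_congr rfl fun k _ => ?_
          rw [map_mul, Complex.conj_ofReal]
          linear_combination (u k x * C (u k x')) * hsq k
  have hψB : ∀ y y', ∑ x, ψ (x, y) * C (ψ (x, y'))
      = ∑ k, (lam k : ℂ) * w k y * C (w k y') := by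
    intro y y'
    have hform : ∀ x y, ψ (x, y) = ∑ i, ((Real.sqrt (lam i) : ℂ) * w i y) * u i x := by
      intro x y; rw [hψ]; exact Finset.sum_congr rfl fun i _ => by ring
    calc ∑ x, ψ (x, y) * C (ψ (x, y'))
        = ∑ i, ((Real.sqrt (lam i) : ℂ) * w i y) * C ((Real.sqrt (lam i) : ℂ) * w i y') := by
          simp only [hform]; exact master u hu _ _
      _ = ∑ k, (lam k : ℂ) * w k y * C (w k y') := by
          refine Finset.sum_congr rfl fun k _ => ?_
          rw [map_mul, Complex.conj_ofReal]
          linear_combination (w k y * C (w k y')) * hsq k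
  -- apply ortho_expand on the A side
  obtain ⟨h1A, hexpA0⟩ := ortho_expand u hu lam hsum (fun x y => φ (x, y)) hnorm
    (fun x x' => by simpa using (hA x x').trans (hψA x x'))
  have hexpA : ∀ x y, φ (x, y) = ∑ i, u i x * ∑ x', C (u i x') * φ (x', y) :=
    fun x y => hexpA0 x y
  -- apply ortho_expand on the B side
  have hnormB : ∑ y, ∑ x, φ (x, y) * C (φ (x, y)) = 1 := by
    rw [Finset.sum_comm]; exact hnorm
  obtain ⟨h1B, hexpB0⟩ := ortho_expand w hw lam hsum (fun y x => φ (x, y)) hnormB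
    (fun y y' => by simpa using (hB y y').trans (hψB y y'))
  have hexpB : ∀ x y, φ (x, y) = ∑ j, w j y * ∑ y', C (w j y') * φ (x, y') :=
    fun x y => hexpB0 y x
  -- coefficients
  set b : Fin m → Fin dB → ℂ := fun i y => ∑ x, C (u i x) * φ (x, y) with hbdef
  set c : Fin m → Fin dA → ℂ := fun j x => ∑ y, C (w j y) * φ (x, y) with hcdef
  set a : Fin m → Fin m → ℂ := fun i j => ∑ x, C (u i x) * c j x with hadef
  have hw' : ∀ i j, ∑ y, C (w i y) * w j y = if i = j then 1 else 0 := by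
    intro i j
    have := congrArg C (hw i j)
    simpa [map_sum, map_mul, apply_ite] using this
  have hexpA' : ∀ x y, φ (x, y) = ∑ i, u i x * b i y := fun x y => hexpA x y
  have hexpB' : ∀ x y, φ (x, y) = ∑ j, w j y * c j x := fun x y => hexpB x y
  have h1A' : ∀ i i', ∑ y, b i y * C (b i' y) = if i = i' then (lam i : ℂ) else 0 :=
    fun i i' => h1A i i'
  have h1B' : ∀ k l, ∑ x, c k x * C (c l x) = if k = l then (lam k : ℂ) else 0 :=
    fun k l => h1B k l
  -- b i = ∑ j, a i j • w j
  have hbw : ∀ i y, b i y = ∑ j, a i j * w j y := by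
    intro i y
    calc b i y = ∑ x, ∑ j, (C (u i x) * c j x) * w j y := by
          refine Finset.sum_congr rfl fun x _ => ?_
          rw [hexpB' x y, Finset.mul_sum]
          exact Finset.sum_congr rfl fun j _ => by ring
      _ = ∑ j, (∑ x, C (u i x) * c j x) * w j y := by
          rw [Finset.sum_comm]
          exact Finset.sum_congr rfl fun j _ => (Finset.sum_mul _ _ _).symm
      _ = ∑ j, a i j * w j y := rfl
  -- c j = ∑ i, a i j • u i
  have hcu : ∀ j x, c j x = ∑ i, a i j * u i x := by
    intro j x
    calc c j x = ∑ y, ∑ i, (C (w j y) * b i y) * u i x := by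
          refine Finset.sum_congr rfl fun y _ => ?_
          rw [hexpA' x y, Finset.mul_sum]
          exact Finset.sum_congr rfl fun i _ => by ring
      _ = ∑ i, (∑ y, C (w j y) * b i y) * u i x := by
          rw [Finset.sum_comm]
          exact Finset.sum_congr rfl fun i _ => (Finset.sum_mul _ _ _).symm
      _ = ∑ i, a i j * u i x := by
          refine Finset.sum_congr rfl fun i _ => ?_
          congr 1
          calc ∑ y, C (w j y) * b i y
              = ∑ y, ∑ j', (a i j') * (C (w j y) * w j' y) := by
                refine Finset.sum_congr rfl fun y _ => ?_
                rw [hbw i y, Finset.mul_sum]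
                exact Finset.sum_congr rfl fun j' _ => by ring
            _ = ∑ j', a i j' * ∑ y, C (w j y) * w j' y := by
                rw [Finset.sum_comm]
                exact Finset.sum_congr rfl fun j' _ => (Finset.mul_sum _ _ _).symm
            _ = a i j := by simp [hw']
  -- A A† = Λ
  have hAA : ∀ i l, ∑ j, a i j * C (a l j) = if i = l then (lam i : ℂ) else 0 := by
    intro i l
    calc ∑ j, a i j * C (a l j)
        = ∑ y, (∑ j, a i j * w j y) * C (∑ j, a l j * w j y) := (master w hw _ _).symm
      _ = ∑ y, b i y * C (b l y) := by
          refine Finset.sum_congr rfl fun y _ => ?_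
          rw [hbw i y, hbw l y]
      _ = if i = l then (lam i : ℂ) else 0 := h1A i l
  -- A† A = Λ
  have hA'A : ∀ k l, ∑ i, a i k * C (a i l) = if k = l then (lam k : ℂ) else 0 := by
    intro k l
    calc ∑ i, a i k * C (a i l)
        = ∑ x, (∑ i, a i k * u i x) * C (∑ i, a i l * u i x) := (master u hu _ _).symm
      _ = ∑ x, c k x * C (c l x) := by
          refine Finset.sum_congr rfl fun x _ => ?_
          rw [hcu k x, hcu l x]
      _ = if k = l then (lam k : ℂ) else 0 := h1B k l
  -- off-diagonal entries vanish
  have hoff : ∀ i l, i ≠ l → a i l = 0 := by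
    intro i l hil
    have e1 : ∑ k, (∑ j, a i j * C (a k j)) * a k l = (lam i : ℂ) * a i l := by
      simp only [hAA]
      simp [ite_mul, mul_comm]
    have e2 : ∑ k, (∑ j, a i j * C (a k j)) * a k l = a i l * (lam l : ℂ) := by
      calc ∑ k, (∑ j, a i j * C (a k j)) * a k l
          = ∑ k, ∑ j, a i j * (C (a k j) * a k l) := by
            refine Finset.sum_congr rfl fun k _ => ?_
            rw [Finset.sum_mul]
            exact Finset.sum_congr rfl fun j _ => by ring
        _ = ∑ j, a i j * ∑ k, C (a k j) * a k l := by
            rw [Finset.sum_comm]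
            exact Finset.sum_congr rfl fun j _ => (Finset.mul_sum _ _ _).symm
        _ = ∑ j, a i j * (if j = l then (lam j : ℂ) else 0) := by
            refine Finset.sum_congr rfl fun j _ => ?_
            congr 1
            have := congrArg C (hA'A j l)
            simpa [hCdef, map_sum, map_mul, apply_ite, Complex.conj_ofReal, mul_comm] using this
        _ = a i l * (lam l : ℂ) := by simp [mul_ite]
    have : ((lam i : ℂ) - (lam l : ℂ)) * a i l = 0 := by
      rw [sub_mul, e1.symm.trans e2]; ring
    rcases mul_eq_zero.mp this with h | h
    · exfalso
      apply hil
      apply hdist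
      have : (lam i : ℂ) = (lam l : ℂ) := by linear_combination h
      exact_mod_cast this
    · exact h
  -- diagonal entries have modulus √λ
  have hdiagsq : ∀ i, a i i * C (a i i) = (lam i : ℂ) := by
    intro i
    have h := hAA i i
    rw [if_pos rfl] at h
    rw [← h]
    refine (Finset.sum_eq_single (f := fun j => a i j * C (a i j)) i (fun j _ hj => ?_) (fun h => absurd (Finset.mem_univ i) h)).symm
    simp [hoff i j fun h' => hj h'.symm]
  have habs : ∀ i, ‖a i i‖ = Real.sqrt (lam i) := by
    intro i
    have hns : Complex.normSq (a i i) = lam i := by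
      have := hdiagsq i
      rw [hCdef, Complex.mul_conj] at this
      exact_mod_cast this
    rw [Complex.norm_def, hns]
  refine ⟨fun i => Complex.arg (a i i), fun x y => ?_⟩
  have hdiag : ∀ i, a i i = Complex.exp (Complex.I * ((Complex.arg (a i i) : ℝ) : ℂ)) *
      (Real.sqrt (lam i) : ℂ) := by
    intro i
    have h := Complex.norm_mul_exp_arg_mul_I (a i i)
    rw [habs i] at h
    calc a i i = (Real.sqrt (lam i) : ℂ) * Complex.exp (((Complex.arg (a i i) : ℝ) : ℂ) * Complex.I) := h.symm
      _ = Complex.exp (Complex.I * ((Complex.arg (a i i) : ℝ) : ℂ)) * (Real.sqrt (lam i) : ℂ) := by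
          rw [mul_comm ((( Complex.arg (a i i) : ℝ) : ℂ)) Complex.I]
          ring
  calc φ (x, y) = ∑ i, u i x * b i y := hexpA' x y
    _ = ∑ i, u i x * ∑ j, a i j * w j y := by
        exact Finset.sum_congr rfl fun i _ => by rw [hbw]
    _ = ∑ i, u i x * (a i i * w i y) := by
        refine Finset.sum_congr rfl fun i _ => ?_
        congr 1
        refine Finset.sum_eq_single (f := fun j => a i j * w j y) i (fun j _ hj => ?_) (fun h => absurd (Finset.mem_univ i) h)
        simp [hoff i j fun h' => hj h'.symm]
    _ = ∑ i, Complex.exp (Complex.I * ((Complex.arg (a i i) : ℝ) : ℂ)) *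
        (Real.sqrt (lam i) : ℂ) * u i x * w i y := by
        refine Finset.sum_congr rfl fun i _ => ?_
        linear_combination u i x * w i y * hdiag i
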